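/- For all n ≥ 1 and all v, f ≥ 1, the number of pairs (α, S), where α is a fixed-point-free involution of Fin(2n) and S ⊆ Fin(2n) is an α-stable subset, such that σ_{α,S} has exactly v orbits on Fin(2n) and σ_{α,S}∘α has exactly f orbits on Fin(2n), equals ∑_{m=0}^{n} binom(2n, 2m)·A^v(m)·A^f(n−m). -/

import Mathlib

/-- The number of orbits of `f` on `S` (forward orbits inside `S`). -/
noncomputable def numOrbitsOn {X : Type*} (f : X → X) (S : Set X) : ℕ :=
  ((fun x => {y | y ∈ S ∧ ∃ k : ℕ, f^[k] x = y}) '' S).ncard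

/-- The vertex-permutation `σ_{α,S}` of the covered map encoded by the pair `(α,S)`:
`σ_{α,S}(h) = γ(α h)` if `h ∈ S` and `σ_{α,S}(h) = γ h` otherwise, where `γ` is the
standard cycle `i ↦ i+1` on `Fin (2n)`. -/
noncomputable def sigmaFun (n : ℕ) (α : Equiv.Perm (Fin (2 * n)))
    (S : Set (Fin (2 * n))) (h : Fin (2 * n)) : Fin (2 * n) := by
  classical
  exact if h ∈ S then finRotate (2 * n) (α h) else finRotate (2 * n) h

/-- `A^v(m)`: the number of rooted unicellular maps with `m` edges and `v` vertices,
i.e. the number of fixed-point-free involutions `β` of `Fin (2m)` such that `γ∘β`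
has exactly `v` orbits; by convention `A^v(0) = 1` iff `v = 1`. -/
noncomputable def A (v m : ℕ) : ℕ :=
  if m = 0 then (if v = 1 then 1 else 0)
  else
    Nat.card {β : Equiv.Perm (Fin (2 * m)) //
      (∀ h, β h ≠ h) ∧ (∀ h, β (β h) = h) ∧
      numOrbitsOn (fun h => finRotate (2 * m) (β h)) Set.univ = v}

section OrbF
variable {X Y : Type*}

def orbF (f : X → X) (x : X) : Set X := {y | ∃ k : ℕ, f^[k] x = y}

lemma mem_orbF_self (f : X → X) (x : X) : x ∈ orbF f x := ⟨0, rfl⟩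

lemma orbF_mono {f : X → X} {x y : X} (h : y ∈ orbF f x) : orbF f y ⊆ orbF f x := by
  obtain ⟨k, rfl⟩ := h
  rintro z ⟨l, rfl⟩
  exact ⟨l + k, Function.iterate_add_apply f l k x⟩

lemma exists_pos_period [Finite X] {f : X → X} (hf : Function.Injective f) (x : X) :
    ∃ p, 0 < p ∧ f^[p] x = x := by
  obtain ⟨i, j, hij, h⟩ := Finite.exists_ne_map_eq_of_infinite (fun k : ℕ => f^[k] x)
  rcases hij.lt_or_gt with hlt | hlt
  · refine ⟨j - i, by omega, ?_⟩
    have : f^[i] (f^[j-i] x) = f^[i] x := by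
      rw [← Function.iterate_add_apply]; rw [show i + (j - i) = j by omega]; exact h.symm
    exact (hf.iterate i) this
  · refine ⟨i - j, by omega, ?_⟩
    have : f^[j] (f^[i-j] x) = f^[j] x := by
      rw [← Function.iterate_add_apply]; rw [show j + (i - j) = i by omega]; exact h
    exact (hf.iterate j) this

lemma orbF_symm [Finite X] {f : X → X} (hf : Function.Injective f) {x y : X}
    (h : y ∈ orbF f x) : x ∈ orbF f y := by
  obtain ⟨k, rfl⟩ := h
  obtain ⟨p, hp, hper⟩ := exists_pos_period hf x
  refine ⟨k * p - k, ?_⟩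
  have hle : k ≤ k * p := Nat.le_mul_of_pos_right k hp
  rw [← Function.iterate_add_apply, show k * p - k + k = k * p by omega]
  clear hle
  induction k with
  | zero => simp
  | succ k ih => rw [Nat.succ_mul, Function.iterate_add_apply, hper, ih]

lemma orbF_eq_of_mem [Finite X] {f : X → X} (hf : Function.Injective f) {x y : X}
    (h : y ∈ orbF f x) : orbF f y = orbF f x :=
  le_antisymm (orbF_mono h) (orbF_mono (orbF_symm hf h))

lemma numOrbitsOn_eq_ncard (f : X → X) (S : Set X) :
    numOrbitsOn f S = ((fun x => S ∩ orbF f x) '' S).ncard := by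
  unfold numOrbitsOn orbF
  congr 1

/-- transport of orbit counts along an injective-on map intertwining the dynamics -/
lemma numOrbitsOn_transport {f : X → X} {g : Y → Y} {S : Set X} {T : Set Y} (e : X → Y)
    (hinj : Set.InjOn e S) (him : e '' S = T) (hfS : ∀ x ∈ S, f x ∈ S)
    (hcomm : ∀ x ∈ S, e (f x) = g (e x)) :
    numOrbitsOn f S = numOrbitsOn g T := by
  have hit : ∀ (k : ℕ), ∀ x ∈ S, f^[k] x ∈ S ∧ e (f^[k] x) = g^[k] (e x) := by
    intro k
    induction k with
    | zero => intro x hx; exact ⟨hx, rfl⟩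
    | succ k ih =>
      intro x hx
      obtain ⟨h1, h2⟩ := ih x hx
      rw [Function.iterate_succ_apply', Function.iterate_succ_apply']
      exact ⟨hfS _ h1, by rw [hcomm _ h1, h2]⟩
  have key : ∀ x ∈ S, e '' (S ∩ orbF f x) = T ∩ orbF g (e x) := by
    intro x hx
    ext y; constructor
    · rintro ⟨z, ⟨hzS, k, rfl⟩, rfl⟩
      exact ⟨him ▸ Set.mem_image_of_mem e hzS, k, ((hit k x hx).2).symm⟩
    · rintro ⟨hyT, k, rfl⟩
      exact ⟨f^[k] x, ⟨(hit k x hx).1, k, rfl⟩, (hit k x hx).2⟩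
  rw [numOrbitsOn_eq_ncard, numOrbitsOn_eq_ncard]
  have himg : ((fun y => T ∩ orbF g y) '' T) = (Set.image e) '' ((fun x => S ∩ orbF f x) '' S) := by
    ext O; constructor
    · rintro ⟨y, hyT, rfl⟩
      obtain ⟨x, hxS, rfl⟩ : ∃ x ∈ S, e x = y := by
        rw [← him] at hyT; obtain ⟨x, hx, rfl⟩ := hyT; exact ⟨x, hx, rfl⟩
      exact ⟨S ∩ orbF f x, ⟨x, hxS, rfl⟩, (key x hxS).symm ▸ rfl⟩
    · rintro ⟨O', ⟨x, hxS, rfl⟩, rfl⟩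
      exact ⟨e x, him ▸ Set.mem_image_of_mem e hxS, (key x hxS).symm⟩
  rw [himg]
  refine (Set.ncard_image_of_injOn ?_).symm
  rintro O1 ⟨x1, hx1, rfl⟩ O2 ⟨x2, hx2, rfl⟩ hOe
  have h1 : S ∩ orbF f x1 ⊆ S := Set.inter_subset_left
  have h2 : S ∩ orbF f x2 ⊆ S := Set.inter_subset_left
  exact (Set.InjOn.image_eq_image_iff hinj h1 h2).mp hOe

end OrbF

section RetMap
open Classical in
/-- first-return / first-entry map into `S` (identity where no positive iterate lands in `S`). -/
noncomputable def retMap {X : Type*} (f : X → X) (S : Set X) (x : X) : X :=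
  if h : ∃ k, 0 < k ∧ f^[k] x ∈ S then f^[Nat.find h] x else x

variable {X : Type*} {f : X → X} {S : Set X}

lemma retMap_mem {x : X} (hx : x ∈ S) : retMap f S x ∈ S := by
  classical
  unfold retMap
  split
  · next h => exact (Nat.find_spec h).2
  · exact hx

open Classical in
lemma retMap_spec {x : X} (h : ∃ k, 0 < k ∧ f^[k] x ∈ S) :
    ∃ k, 0 < k ∧ f^[k] x ∈ S ∧ retMap f S x = f^[k] x ∧
      ∀ i, 0 < i → i < k → f^[i] x ∉ S := by
  classical
  refine ⟨Nat.find h, (Nat.find_spec h).1, (Nat.find_spec h).2, ?_, ?_⟩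
  · unfold retMap; rw [dif_pos h]
  · intro i hi hik hmem
    exact Nat.find_min h hik ⟨hi, hmem⟩

/-- On points of `S`, the orbit of `x` intersected with `S` is the same for `f` and its
first-return map. -/
lemma inter_orbF_retMap (hex : ∀ x ∈ S, ∃ k, 0 < k ∧ f^[k] x ∈ S) {x : X} (hx : x ∈ S) :
    S ∩ orbF f x = S ∩ orbF (retMap f S) x := by
  have hsub : ∀ y ∈ S, ∀ j : ℕ, (retMap f S)^[j] y ∈ S ∧ (retMap f S)^[j] y ∈ orbF f y := by
    intro y hy j
    induction j with
    | zero => exact ⟨hy, mem_orbF_self f y⟩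
    | succ j ih =>
      rw [Function.iterate_succ_apply']
      obtain ⟨h1, h2⟩ := ih
      obtain ⟨k, hk0, hkS, heq, -⟩ := retMap_spec (hex _ h1)
      refine ⟨heq ▸ hkS, ?_⟩
      rw [heq]
      exact orbF_mono h2 ⟨k, rfl⟩
  have reach : ∀ k : ℕ, ∀ x ∈ S, f^[k] x ∈ S → f^[k] x ∈ orbF (retMap f S) x := by
    intro k
    induction k using Nat.strong_induction_on with
    | _ k ih =>
      intro x hx hkS
      rcases Nat.eq_zero_or_pos k with rfl | hk
      · exact mem_orbF_self _ x
      · obtain ⟨j, hj0, hjS, heq, hjmin⟩ := retMap_spec (hex x hx)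
        have hjk : j ≤ k := by
          by_contra hlt
          exact hjmin k hk (by omega) hkS
        have hsplit : f^[k] x = f^[k - j] (retMap f S x) := by
          rw [heq, ← Function.iterate_add_apply, show k - j + j = k by omega]
        rcases Nat.eq_or_lt_of_le hjk with rfl | hjlt
        · rw [show j - j = 0 by omega] at hsplit
          simp only [Function.iterate_zero_apply] at hsplit
          rw [hsplit]
          exact ⟨1, by simp⟩
        · have hmem := ih (k - j) (by omega) (retMap f S x) (heq ▸ hjS) (by rw [← hsplit]; exact hkS)
          rw [hsplit]
          exact orbF_mono ⟨1, by simp⟩ hmem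
  apply Set.eq_of_subset_of_subset
  · rintro y ⟨hyS, k, rfl⟩
    exact ⟨hyS, reach k x hx hyS⟩
  · rintro y ⟨hyS, k, rfl⟩
    exact ⟨(hsub x hx k).1, (hsub x hx k).2⟩

end RetMap

section Restrict
variable {X : Type*} [Finite X] {f : X → X} {S : Set X}

lemma numOrbitsOn_univ_eq_restrict (hf : Function.Injective f)
    (hmeet : ∀ x : X, ∃ k, f^[k] x ∈ S) :
    numOrbitsOn f (Set.univ : Set X) = numOrbitsOn f S := by
  have hinj : Set.InjOn (fun O => S ∩ O) ((fun x => Set.univ ∩ orbF f x) '' Set.univ) := by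
    rintro O1 ⟨x1, -, rfl⟩ O2 ⟨x2, -, rfl⟩ hOe
    simp only [Set.univ_inter] at hOe ⊢
    obtain ⟨k1, hk1⟩ := hmeet x1
    have hmem : f^[k1] x1 ∈ S ∩ orbF f x1 := ⟨hk1, k1, rfl⟩
    have hmem2 := hOe ▸ hmem
    rw [← orbF_eq_of_mem hf hmem.2, orbF_eq_of_mem hf hmem2.2]
  have himg : ((fun x => S ∩ orbF f x) '' S) = (fun O => S ∩ O) '' ((fun x => Set.univ ∩ orbF f x) '' Set.univ) := by
    ext O; constructor
    · rintro ⟨x, hxS, rfl⟩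
      exact ⟨Set.univ ∩ orbF f x, ⟨x, trivial, rfl⟩, by simp⟩
    · rintro ⟨O', ⟨x, -, rfl⟩, rfl⟩
      obtain ⟨k, hk⟩ := hmeet x
      refine ⟨f^[k] x, hk, ?_⟩
      simp only [Set.univ_inter]
      rw [orbF_eq_of_mem hf ⟨k, rfl⟩]
  rw [numOrbitsOn_eq_ncard, numOrbitsOn_eq_ncard, himg, Set.ncard_image_of_injOn hinj]

omit [Finite X] in
lemma numOrbitsOn_restrict_retMap (hex : ∀ x ∈ S, ∃ k, 0 < k ∧ f^[k] x ∈ S) :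
    numOrbitsOn f S = numOrbitsOn (retMap f S) S := by
  rw [numOrbitsOn_eq_ncard, numOrbitsOn_eq_ncard]
  congr 1
  apply Set.image_congr
  intro x hx
  exact inter_orbF_retMap hex hx

/-- transitivity from a single orbit -/
lemma orbF_trans_of_numOrbitsOn_univ_eq_one {Y : Type*} {g : Y → Y}
    (h1 : numOrbitsOn g (Set.univ : Set Y) = 1) (x y : Y) : y ∈ orbF g x := by
  rw [numOrbitsOn_eq_ncard] at h1
  obtain ⟨O, hO⟩ := Set.ncard_eq_one.mp h1
  have hx : Set.univ ∩ orbF g x ∈ ((fun x => Set.univ ∩ orbF g x) '' Set.univ) := ⟨x, trivial, rfl⟩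
  have hy : Set.univ ∩ orbF g y ∈ ((fun x => Set.univ ∩ orbF g x) '' Set.univ) := ⟨y, trivial, rfl⟩
  rw [hO] at hx hy
  rw [Set.mem_singleton_iff] at hx hy
  have : y ∈ Set.univ ∩ orbF g y := ⟨trivial, mem_orbF_self g y⟩
  rw [hy, ← hx] at this
  exact this.2

end Restrict

section Enum
variable {Y : Type*} [Fintype Y] {g : Y → Y}

lemma no_small_period (htrans : ∀ x y : Y, y ∈ orbF g x)
    {M : ℕ} (hcard : Nat.card Y = M) (y₀ : Y) {p : ℕ} (hp : 0 < p) (hpM : p < M)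
    (hper : g^[p] y₀ = y₀) : False := by
  classical
  have hper' : Function.IsPeriodicPt g p y₀ := hper
  have hmod : ∀ k : ℕ, g^[k] y₀ = g^[k % p] y₀ := fun k => (hper'.iterate_mod_apply k).symm
  have hsub : (Finset.univ : Finset Y) ⊆ (Finset.range p).image (fun r => g^[r] y₀) := by
    intro y _
    obtain ⟨k, rfl⟩ := htrans y₀ y
    rw [Finset.mem_image]
    exact ⟨k % p, Finset.mem_range.mpr (Nat.mod_lt _ hp), (hmod k).symm⟩
  have h1 := Finset.card_le_card hsub
  rw [Finset.card_univ, ← Nat.card_eq_fintype_card, hcard] at h1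
  have h2 := h1.trans (Finset.card_image_le.trans (le_of_eq (Finset.card_range p)))
  omega

lemma exists_cycle_enum (hg : Function.Injective g) (htrans : ∀ x y : Y, y ∈ orbF g x)
    {M : ℕ} (hM : 0 < M) (hcard : Nat.card Y = M) :
    ∃ e : Fin M ≃ Y, ∀ i : Fin M, e ⟨(i.val + 1) % M, Nat.mod_lt _ hM⟩ = g (e i) := by
  classical
  have hne : Nonempty Y := (Nat.card_pos_iff.mp (hcard ▸ hM)).1
  obtain ⟨y₀⟩ := hne
  set e0 : Fin M → Y := fun i => g^[i.val] y₀ with he0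
  have hinj : Function.Injective e0 := by
    intro i j hij
    by_contra hne'
    rcases Ne.lt_or_gt (fun h : i.val = j.val => hne' (Fin.ext h)) with hlt | hlt
    · have : g^[i.val] (g^[j.val - i.val] y₀) = g^[i.val] y₀ := by
        rw [← Function.iterate_add_apply, show i.val + (j.val - i.val) = j.val by omega]
        exact hij.symm
      exact no_small_period htrans hcard y₀ (by omega : 0 < j.val - i.val)
        (by omega : j.val - i.val < M) ((hg.iterate i.val) this)
    · have : g^[j.val] (g^[i.val - j.val] y₀) = g^[j.val] y₀ := by
        rw [← Function.iterate_add_apply, show j.val + (i.val - j.val) = i.val by omega]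
        exact hij
      exact no_small_period htrans hcard y₀ (by omega : 0 < i.val - j.val)
        (by omega : i.val - j.val < M) ((hg.iterate j.val) this)
  have hbij : Function.Bijective e0 := by
    rw [Fintype.bijective_iff_injective_and_card]
    refine ⟨hinj, by rw [Fintype.card_fin, ← hcard, Nat.card_eq_fintype_card]⟩
  have hperM : g^[M] y₀ = y₀ := by
    obtain ⟨j, hj⟩ := hbij.2 (g^[M] y₀)
    rcases Nat.eq_zero_or_pos j.val with h0 | hpos
    · rw [he0] at hj; simp only [h0, Function.iterate_zero_apply] at hj; exact hj.symm
    · exfalso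
      have : g^[j.val] (g^[M - j.val] y₀) = g^[j.val] y₀ := by
        rw [← Function.iterate_add_apply, show j.val + (M - j.val) = M by omega]
        exact hj.symm
      exact no_small_period htrans hcard y₀ (by omega : 0 < M - j.val)
        (by omega : M - j.val < M) ((hg.iterate j.val) this)
  refine ⟨Equiv.ofBijective e0 hbij, ?_⟩
  intro i
  simp only [Equiv.ofBijective_apply, he0]
  rcases Nat.lt_or_ge (i.val + 1) M with hlt | hge
  · rw [Nat.mod_eq_of_lt hlt, Function.iterate_succ_apply']
  · have hiM := i.isLt
    have hieq : i.val = M - 1 := by omega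
    have : (i.val + 1) % M = 0 := by
      have h1 : i.val + 1 = M := by omega
      rw [h1, Nat.mod_self]
    rw [this]
    simp only [Function.iterate_zero_apply]
    conv_lhs => rw [← hperM]
    have hstep : g (g^[M - 1] y₀) = g^[M] y₀ := by
      rw [← Function.iterate_succ_apply' g (M-1) y₀]
      congr 1
      omega
    rw [hieq, hstep]

end Enum

section Agree
variable {X : Type*} {σ γ : X → X} {S : Set X}

lemma sigma_agree (hout : ∀ y ∉ S, σ y = γ y) :
    ∀ j : ℕ, ∀ x : X, (∀ i < j, γ^[i] x ∉ S) → σ^[j] x = γ^[j] x := by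
  intro j
  induction j with
  | zero => intro x _; rfl
  | succ j ih =>
    intro x hx
    rw [Function.iterate_succ_apply', Function.iterate_succ_apply',
      ih x (fun i hi => hx i (by omega)), hout _ (hx j (by omega))]

lemma retMap_eq_iterate {f : X → X} {x : X} {k : ℕ} (hk : 0 < k) (hkS : f^[k] x ∈ S)
    (hmin : ∀ i, 0 < i → i < k → f^[i] x ∉ S) : retMap f S x = f^[k] x := by
  obtain ⟨k', hk'0, hk'S, heq, hmin'⟩ := retMap_spec (S := S) ⟨k, hk, hkS⟩
  rcases lt_trichotomy k' k with h | h | h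
  · exact absurd hk'S (hmin k' hk'0 h)
  · rw [heq, h]
  · exact absurd hkS (hmin' k hk h)

lemma retMap_shift (hout : ∀ y ∉ S, σ y = γ y) {x z : X} (hx : σ x = γ z)
    (hmeetγ : ∀ y : X, ∃ k, γ^[k] y ∈ S) :
    retMap σ S x = retMap γ S z := by
  have hP : ∃ k, 0 < k ∧ γ^[k] z ∈ S := by
    obtain ⟨k, hk⟩ := hmeetγ (γ z)
    exact ⟨k + 1, Nat.succ_pos k, by rwa [Function.iterate_succ_apply]⟩
  obtain ⟨a, ha0, haS, heqa, hamin⟩ := retMap_spec hP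
  have hrel : ∀ k, 0 < k → (∀ i, 0 < i → i < k → γ^[i] z ∉ S) → σ^[k] x = γ^[k] z := by
    intro k hk hmink
    obtain ⟨k', rfl⟩ : ∃ k', k = k' + 1 := ⟨k - 1, by omega⟩
    rw [Function.iterate_succ_apply, hx, Function.iterate_succ_apply]
    exact sigma_agree hout k' (γ z) (fun i hi => by
      rw [← Function.iterate_succ_apply]
      exact hmink (i + 1) (Nat.succ_pos i) (by omega))
  rw [heqa]
  refine (retMap_eq_iterate ha0 (by rw [hrel a ha0 hamin]; exact haS) ?_).trans
    (hrel a ha0 hamin)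
  intro i hi0 hik
  rw [hrel i hi0 (fun i' h1 h2 => hamin i' h1 (by omega))]
  exact hamin i hi0 hik

lemma retMap_injOn {f : X → X} (hf : Function.Injective f)
    (hex : ∀ x ∈ S, ∃ k, 0 < k ∧ f^[k] x ∈ S) : Set.InjOn (retMap f S) S := by
  intro s hs t ht hst
  obtain ⟨k, hk0, hkS, heqk, hmink⟩ := retMap_spec (hex s hs)
  obtain ⟨l, hl0, hlS, heql, hminl⟩ := retMap_spec (hex t ht)
  rw [heqk, heql] at hst
  rcases le_or_gt k l with h | h
  · have : s = f^[l - k] t := (hf.iterate k) (by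
      rw [← Function.iterate_add_apply, show k + (l - k) = l by omega]; exact hst)
    rcases Nat.eq_or_lt_of_le h with rfl | hlt
    · simpa using this
    · exact absurd (this ▸ hs) (hminl (l - k) (by omega) (by omega))
  · have : t = f^[k - l] s := (hf.iterate l) (by
      rw [← Function.iterate_add_apply, show l + (k - l) = k by omega]; exact hst.symm)
    exact absurd (this ▸ ht) (hmink (k - l) (by omega) (by omega))

end Agree

section FinN
variable {N : ℕ} [NeZero N]
open Fin.NatCast

lemma finRotate_apply' (x : Fin N) : finRotate N x = x + 1 := by
  rcases N with - | n
  · exact absurd rfl (NeZero.ne 0)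
  · exact finRotate_succ_apply x

lemma finRotate_iterate (k : ℕ) (x : Fin N) : (finRotate N)^[k] x = x + (k : Fin N) := by
  induction k with
  | zero => simp
  | succ k ih =>
    rw [Function.iterate_succ_apply', ih, finRotate_apply']
    push_cast
    simp only [Nat.cast_succ, add_assoc]

lemma mem_orbF_finRotate (x y : Fin N) : y ∈ orbF (finRotate N) x := by
  refine ⟨(y - x).val, ?_⟩
  rw [finRotate_iterate, Fin.cast_val_eq_self]
  exact add_sub_cancel x y

lemma numOrbitsOn_finRotate_univ : numOrbitsOn (finRotate N) (Set.univ : Set (Fin N)) = 1 := by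
  rw [numOrbitsOn_eq_ncard]
  have : ((fun x => Set.univ ∩ orbF (finRotate N) x) '' Set.univ) = {Set.univ} := by
    have hN : Nonempty (Fin N) := ⟨0⟩
    obtain ⟨x0⟩ := hN
    ext O
    simp only [Set.mem_image, Set.mem_singleton_iff]
    constructor
    · rintro ⟨x, -, rfl⟩
      rw [Set.univ_inter]
      exact Set.eq_univ_of_forall (fun y => mem_orbF_finRotate x y)
    · rintro rfl
      refine ⟨x0, trivial, ?_⟩
      rw [Set.univ_inter]
      exact Set.eq_univ_of_forall (fun y => mem_orbF_finRotate x0 y)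
  rw [this, Set.ncard_singleton]

lemma hmeet_gamma {S : Set (Fin N)} (hS : S.Nonempty) (y : Fin N) :
    ∃ k, (finRotate N)^[k] y ∈ S := by
  obtain ⟨s, hs⟩ := hS
  obtain ⟨k, hk⟩ := mem_orbF_finRotate y s
  exact ⟨k, hk ▸ hs⟩

noncomputable def sSucc {N : ℕ} (S : Set (Fin N)) (y : ↥S) : ↥S :=
  ⟨retMap (finRotate N) S y.val, retMap_mem y.2⟩

lemma hex_gamma {S : Set (Fin N)} (hS : S.Nonempty) :
    ∀ x ∈ S, ∃ k, 0 < k ∧ (finRotate N)^[k] x ∈ S := by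
  intro x _
  obtain ⟨k, hk⟩ := hmeet_gamma hS (finRotate N x)
  exact ⟨k + 1, Nat.succ_pos k, by rwa [Function.iterate_succ_apply]⟩

lemma sSucc_injective {S : Set (Fin N)} (hS : S.Nonempty) : Function.Injective (sSucc S) := by
  intro y z h
  have := retMap_injOn (S := S) (finRotate N).injective (hex_gamma hS) y.2 z.2
    (congrArg Subtype.val h)
  exact Subtype.ext this

/-- the key orbit-count lemma -/
lemma key_orbit_count (α : Equiv.Perm (Fin N)) (S : Set (Fin N))
    (hst : ∀ x, x ∈ S ↔ α x ∈ S) (σ : Fin N → Fin N)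
    (hσin : ∀ x ∈ S, σ x = finRotate N (α x)) (hσout : ∀ x ∉ S, σ x = finRotate N x)
    (hS : S.Nonempty) :
    numOrbitsOn σ Set.univ =
      numOrbitsOn (fun y : ↥S => sSucc S (α.subtypePerm (fun x => (hst x).symm) y)) Set.univ := by
  have hσinj : Function.Injective σ := by
    intro x y h
    by_cases hx : x ∈ S <;> by_cases hy : y ∈ S
    · rw [hσin x hx, hσin y hy] at h
      exact α.injective ((finRotate N).injective h)
    · rw [hσin x hx, hσout y hy] at h
      exact absurd (((finRotate N).injective h) ▸ (hst x).mp hx) hy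
    · rw [hσout x hx, hσin y hy] at h
      exact absurd (((finRotate N).injective h).symm ▸ (hst y).mp hy) hx
    · rw [hσout x hx, hσout y hy] at h
      exact (finRotate N).injective h
  have hmeetσ : ∀ x, ∃ k, σ^[k] x ∈ S := by
    intro x
    classical
    have hγ : ∃ k, (finRotate N)^[k] x ∈ S := hmeet_gamma hS x
    have j := Nat.find hγ
    refine ⟨Nat.find hγ, ?_⟩
    rw [sigma_agree hσout (Nat.find hγ) x (fun i hi => Nat.find_min hγ hi)]
    exact Nat.find_spec hγ
  have hex : ∀ x ∈ S, ∃ k, 0 < k ∧ σ^[k] x ∈ S := by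
    intro x _
    obtain ⟨k, hk⟩ := hmeetσ (σ x)
    exact ⟨k + 1, Nat.succ_pos k, by rwa [Function.iterate_succ_apply]⟩
  rw [numOrbitsOn_univ_eq_restrict hσinj hmeetσ, numOrbitsOn_restrict_retMap hex]
  refine (numOrbitsOn_transport (Subtype.val) (Subtype.val_injective.injOn)
    (by simp) (fun y _ => Set.mem_univ _) ?_).symm
  intro y _
  show (retMap (finRotate N) S (α y.val) : Fin N) = retMap σ S y.val
  exact (retMap_shift hσout (hσin y.val y.2) (hmeet_gamma hS)).symm

lemma sSucc_trans {S : Set (Fin N)} (hS : S.Nonempty) :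
    ∀ x y : ↥S, y ∈ orbF (sSucc S) x := by
  have h1 : numOrbitsOn (fun y : ↥S => sSucc S ((1 : Equiv.Perm (Fin N)).subtypePerm
      (fun x => Iff.rfl) y)) Set.univ = 1 := by
    rw [← key_orbit_count 1 S (fun x => Iff.rfl) (finRotate N) (fun x _ => rfl) (fun x _ => rfl) hS]
    exact numOrbitsOn_finRotate_univ
  have heq : (fun y : ↥S => sSucc S ((1 : Equiv.Perm (Fin N)).subtypePerm
      (fun x => Iff.rfl) y)) = sSucc S := rfl
  rw [heq] at h1
  exact orbF_trans_of_numOrbitsOn_univ_eq_one h1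

end FinN

section CV
variable {N : ℕ} [NeZero N]

def PvProp (S : Set (Fin N)) (w : ℕ) (b : Equiv.Perm ↥S) : Prop :=
  (S.Nonempty → numOrbitsOn (fun y => sSucc S (b y)) Set.univ = w) ∧ (S = ∅ → w = 1)

lemma cv_iff (α : Equiv.Perm (Fin N)) (S : Set (Fin N)) (hst : ∀ x, x ∈ S ↔ α x ∈ S)
    (σ : Fin N → Fin N) (hσin : ∀ x ∈ S, σ x = finRotate N (α x))
    (hσout : ∀ x ∉ S, σ x = finRotate N x) (w : ℕ) :
    numOrbitsOn σ Set.univ = w ↔ PvProp S w (α.subtypePerm (fun x => (hst x).symm)) := by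
  rcases Set.eq_empty_or_nonempty S with rfl | hS
  · have hσ : σ = ⇑(finRotate N) := funext fun x => hσout x (Set.notMem_empty x)
    rw [hσ, numOrbitsOn_finRotate_univ]
    constructor
    · intro h
      exact ⟨fun hne => absurd hne (by simp), fun _ => h.symm⟩
    · rintro ⟨-, h2⟩
      exact (h2 rfl).symm
  · rw [key_orbit_count α S hst σ hσin hσout hS]
    constructor
    · intro h
      exact ⟨fun _ => h, fun h0 => absurd h0 hS.ne_empty⟩
    · rintro ⟨h1, -⟩
      exact h1 hS

lemma cnt_eval_pos (S : Set (Fin N)) {m : ℕ} (hm : 0 < m) (hS : S.ncard = 2 * m) (w : ℕ) :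
    Nat.card {b : Equiv.Perm ↥S // (∀ y, b y ≠ y) ∧ (∀ y, b (b y) = y) ∧ PvProp S w b} =
      A w m := by
  classical
  have hSne : S.Nonempty := by
    rw [Set.nonempty_iff_ne_empty]
    intro h
    rw [h, Set.ncard_empty] at hS
    omega
  haveI : Fintype ↥S := Fintype.ofFinite ↥S
  haveI : NeZero (2 * m) := ⟨by omega⟩
  have hcard : Nat.card ↥S = 2 * m := by rw [Nat.card_coe_set_eq, hS]
  obtain ⟨e, he⟩ := exists_cycle_enum (sSucc_injective hSne) (sSucc_trans hSne)
    (by omega : 0 < 2 * m) hcard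
  have hrot : ∀ i : Fin (2 * m), e (finRotate (2 * m) i) = sSucc S (e i) := by
    intro i
    rw [← he i]
    congr 1
    apply Fin.ext
    rw [finRotate_apply']
    show ((i + 1 : Fin (2 * m))).val = (i.val + 1) % (2 * m)
    rw [Fin.add_def, Fin.val_one']
    conv_rhs => rw [Nat.add_mod]
    rw [Nat.mod_eq_of_lt i.isLt]
  rw [A, if_neg (by omega : ¬ m = 0)]
  apply Nat.card_congr
  refine (Equiv.subtypeEquiv e.permCongr ?_).symm
  intro β
  have hpc : ∀ y : ↥S, e.permCongr β y = e (β (e.symm y)) := fun y => rfl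
  constructor
  · rintro ⟨h1, h2, h3⟩
    refine ⟨?_, ?_, ?_, ?_⟩
    · intro y hy
      rw [hpc] at hy
      exact h1 (e.symm y) (by simpa using congrArg e.symm hy)
    · intro y
      rw [hpc, hpc]
      simp only [Equiv.symm_apply_apply]
      rw [h2]
      simp
    · intro _
      refine (numOrbitsOn_transport (⇑e) (e.injective.injOn) (by simp) (fun x _ => Set.mem_univ _) ?_).symm.trans h3
      intro i _
      show e ((fun h => finRotate (2*m) (β h)) i) = sSucc S (e.permCongr β (e i))
      rw [hpc]
      simp only [Equiv.symm_apply_apply]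
      exact hrot (β i)
    · intro h0
      exact absurd h0 hSne.ne_empty
  · rintro ⟨h1, h2, h3, -⟩
    refine ⟨?_, ?_, ?_⟩
    · intro i hi
      exact h1 (e i) (by rw [hpc]; simp [hi])
    · intro i
      have := h2 (e i)
      rw [hpc, hpc] at this
      simp only [Equiv.symm_apply_apply] at this
      exact e.injective this
    · refine (numOrbitsOn_transport (⇑e) (e.injective.injOn) (by simp) (fun x _ => Set.mem_univ _) ?_).trans (h3 hSne)
      intro i _
      show e ((fun h => finRotate (2*m) (β h)) i) = sSucc S (e.permCongr β (e i))
      rw [hpc]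
      simp only [Equiv.symm_apply_apply]
      exact hrot (β i)

end CV

lemma cnt_eval_zero' {N : ℕ} (S : Set (Fin N)) (hS : S = ∅) (w : ℕ) :
    Nat.card {b : Equiv.Perm ↥S // (∀ y, b y ≠ y) ∧ (∀ y, b (b y) = y) ∧ PvProp S w b} =
      A w 0 := by
  subst hS
  haveI : IsEmpty ↥(∅ : Set (Fin N)) := by
    constructor; rintro ⟨x, hx⟩; exact hx
  rw [A, if_pos rfl]
  by_cases hw : w = 1
  · rw [if_pos hw]
    haveI : Unique {b : Equiv.Perm ↥(∅ : Set (Fin N)) //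
        (∀ y, b y ≠ y) ∧ (∀ y, b (b y) = y) ∧ PvProp ∅ w b} := by
      refine ⟨⟨⟨1, ?_, ?_, ?_, ?_⟩⟩, ?_⟩
      · intro y; exact (IsEmpty.false y).elim
      · intro y; exact (IsEmpty.false y).elim
      · intro hne; exact absurd hne (Set.not_nonempty_empty)
      · intro _; exact hw
      · rintro ⟨b, hb⟩
        refine Subtype.ext ?_
        exact Equiv.ext fun y => (IsEmpty.false y).elim
    exact Nat.card_unique
  · rw [if_neg hw]
    haveI : IsEmpty {b : Equiv.Perm ↥(∅ : Set (Fin N)) //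
        (∀ y, b y ≠ y) ∧ (∀ y, b (b y) = y) ∧ PvProp ∅ w b} := by
      constructor
      rintro ⟨b, -, -, -, h⟩
      exact hw (h rfl)
    exact Nat.card_of_isEmpty

lemma even_card_of_fpf_invol {Y : Type*} [Fintype Y] [DecidableEq Y] (b : Equiv.Perm Y)
    (h1 : ∀ y, b y ≠ y) (h2 : ∀ y, b (b y) = y) : Even (Fintype.card Y) := by
  have hsupp : b.support = Finset.univ := by
    ext y; simp [Equiv.Perm.mem_support, h1 y]
  have hb2 : b ^ 2 = 1 := by
    ext y
    simp [pow_two, h2 y]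
  have horder : orderOf b ∣ 2 := orderOf_dvd_of_pow_eq_one hb2
  have hentry : ∀ x ∈ b.cycleType, x = 2 := by
    intro x hx
    have hdvd : x ∣ 2 := dvd_trans (Multiset.dvd_lcm hx) (by rw [Equiv.Perm.lcm_cycleType]; exact horder)
    have h2le : 2 ≤ x := Equiv.Perm.two_le_of_mem_cycleType hx
    have := Nat.le_of_dvd (by omega) hdvd
    omega
  have hsum : b.cycleType.sum = Fintype.card Y := by
    rw [Equiv.Perm.sum_cycleType, hsupp, Finset.card_univ]
  rw [← hsum, Multiset.eq_replicate_of_mem hentry, Multiset.sum_replicate, smul_eq_mul]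
  exact even_two.mul_left _

section Glue
variable {X : Type*}

open Classical in
noncomputable def glueP (S : Set X) (b : Equiv.Perm ↥S) (b' : Equiv.Perm ↥(Sᶜ : Set X)) :
    Equiv.Perm X where
  toFun x := if h : x ∈ S then ((b ⟨x, h⟩ : ↥S) : X) else ((b' ⟨x, h⟩ : ↥(Sᶜ : Set X)) : X)
  invFun x := if h : x ∈ S then ((b.symm ⟨x, h⟩ : ↥S) : X) else ((b'.symm ⟨x, h⟩ : ↥(Sᶜ : Set X)) : X)
  left_inv := by
    intro x
    dsimp only
    by_cases h : x ∈ S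
    · rw [dif_pos h, dif_pos (b ⟨x, h⟩).2]
      simp
    · rw [dif_neg h, dif_neg (fun hc => ((b' ⟨x, h⟩).2 : _ ∉ S) hc)]
      simp
  right_inv := by
    intro x
    dsimp only
    by_cases h : x ∈ S
    · rw [dif_pos h, dif_pos (b.symm ⟨x, h⟩).2]
      simp
    · rw [dif_neg h, dif_neg (fun hc => ((b'.symm ⟨x, h⟩).2 : _ ∉ S) hc)]
      simp

lemma glueP_apply_mem {S : Set X} {b : Equiv.Perm ↥S} {b' : Equiv.Perm ↥(Sᶜ : Set X)}
    {x : X} (h : x ∈ S) : glueP S b b' x = ((b ⟨x, h⟩ : ↥S) : X) := by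
  simp only [glueP, Equiv.coe_fn_mk]
  rw [dif_pos h]

lemma glueP_apply_not_mem {S : Set X} {b : Equiv.Perm ↥S} {b' : Equiv.Perm ↥(Sᶜ : Set X)}
    {x : X} (h : x ∉ S) : glueP S b b' x = ((b' ⟨x, h⟩ : ↥(Sᶜ : Set X)) : X) := by
  simp only [glueP, Equiv.coe_fn_mk]
  rw [dif_neg h]

noncomputable def stableEquivProd (S : Set X) :
    {α : Equiv.Perm X // ∀ x, x ∈ S ↔ α x ∈ S} ≃
      Equiv.Perm ↥S × Equiv.Perm ↥(Sᶜ : Set X) where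
  toFun a := (a.1.subtypePerm (fun x => (a.2 x).symm), a.1.subtypePerm (fun x => not_congr (a.2 x).symm))
  invFun q := ⟨glueP S q.1 q.2, by
    intro x
    by_cases h : x ∈ S
    · rw [glueP_apply_mem h]
      simp [h, (q.1 ⟨x, h⟩).2]
    · rw [glueP_apply_not_mem h]
      simp [h]
      exact (q.2 ⟨x, h⟩).2⟩
  left_inv := by
    rintro ⟨α, hα⟩
    refine Subtype.ext (Equiv.ext fun x => ?_)
    by_cases h : x ∈ S
    · rw [glueP_apply_mem h]; rfl
    · rw [glueP_apply_not_mem h]; rfl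
  right_inv := by
    rintro ⟨b, b'⟩
    refine Prod.ext ?_ ?_
    · refine Equiv.ext fun y => Subtype.ext ?_
      show (glueP S b b' y.val : X) = _
      rw [glueP_apply_mem y.2]
    · refine Equiv.ext fun y => Subtype.ext ?_
      show (glueP S b b' y.val : X) = _
      rw [glueP_apply_not_mem y.2]

end Glue

section PerS

lemma sigmaFun_mem {n : ℕ} {α : Equiv.Perm (Fin (2*n))} {S : Set (Fin (2*n))} {x : Fin (2*n)}
    (hx : x ∈ S) : sigmaFun n α S x = finRotate (2*n) (α x) := by
  unfold sigmaFun
  rw [if_pos hx]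

lemma sigmaFun_not_mem {n : ℕ} {α : Equiv.Perm (Fin (2*n))} {S : Set (Fin (2*n))} {x : Fin (2*n)}
    (hx : x ∉ S) : sigmaFun n α S x = finRotate (2*n) x := by
  unfold sigmaFun
  rw [if_neg hx]

lemma perS (n v f : ℕ) (hn : 1 ≤ n) (S : Set (Fin (2*n))) :
    Nat.card {α : Equiv.Perm (Fin (2*n)) //
      (∀ h, α h ≠ h) ∧ (∀ h, α (α h) = h) ∧ (∀ s ∈ S, α s ∈ S) ∧
      numOrbitsOn (sigmaFun n α S) Set.univ = v ∧
      numOrbitsOn (fun h => sigmaFun n α S (α h)) Set.univ = f} =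
    if Even S.ncard then A v (S.ncard / 2) * A f (n - S.ncard / 2) else 0 := by
  classical
  haveI : NeZero (2*n) := ⟨by omega⟩
  have hcardS : Fintype.card ↥S = S.ncard := by
    rw [← Nat.card_eq_fintype_card, Nat.card_coe_set_eq]
  by_cases hpar : Even S.ncard
  swap
  · rw [if_neg hpar]
    rw [Nat.card_eq_zero]
    left
    constructor
    rintro ⟨α, h1, h2, h3, -, -⟩
    have hst : ∀ x, x ∈ S ↔ α x ∈ S := by
      intro x
      refine ⟨fun hx => h3 x hx, fun hax => ?_⟩
      have := h3 _ hax
      rwa [h2 x] at this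
    apply hpar
    rw [← hcardS]
    refine even_card_of_fpf_invol (α.subtypePerm (fun x => (hst x).symm)) ?_ ?_
    · intro y hy
      exact h1 y.val (congrArg Subtype.val hy)
    · intro y
      exact Subtype.ext (h2 y.val)
  rw [if_pos hpar]
  -- the master equivalence
  have hmaster : Nat.card {α : Equiv.Perm (Fin (2*n)) //
      (∀ h, α h ≠ h) ∧ (∀ h, α (α h) = h) ∧ (∀ s ∈ S, α s ∈ S) ∧
      numOrbitsOn (sigmaFun n α S) Set.univ = v ∧
      numOrbitsOn (fun h => sigmaFun n α S (α h)) Set.univ = f} =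
      Nat.card {b : Equiv.Perm ↥S // (∀ y, b y ≠ y) ∧ (∀ y, b (b y) = y) ∧ PvProp S v b} *
      Nat.card {b' : Equiv.Perm ↥(Sᶜ : Set (Fin (2*n))) //
        (∀ y, b' y ≠ y) ∧ (∀ y, b' (b' y) = y) ∧ PvProp Sᶜ f b'} := by
    rw [← Nat.card_prod]
    apply Nat.card_congr
    have E0 : {α : Equiv.Perm (Fin (2*n)) //
        (∀ h, α h ≠ h) ∧ (∀ h, α (α h) = h) ∧ (∀ s ∈ S, α s ∈ S) ∧
        numOrbitsOn (sigmaFun n α S) Set.univ = v ∧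
        numOrbitsOn (fun h => sigmaFun n α S (α h)) Set.univ = f} ≃
        {α : Equiv.Perm (Fin (2*n)) // (∀ x, x ∈ S ↔ α x ∈ S) ∧
          ((∀ h, α h ≠ h) ∧ (∀ h, α (α h) = h) ∧
          numOrbitsOn (sigmaFun n α S) Set.univ = v ∧
          numOrbitsOn (fun h => sigmaFun n α S (α h)) Set.univ = f)} := by
      apply Equiv.subtypeEquivRight
      intro α
      constructor
      · rintro ⟨h1, h2, h3, h4, h5⟩
        refine ⟨fun x => ⟨fun hx => h3 x hx, fun hax => ?_⟩, h1, h2, h4, h5⟩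
        have := h3 _ hax
        rwa [h2 x] at this
      · rintro ⟨hst, h1, h2, h4, h5⟩
        exact ⟨h1, h2, fun s hs => (hst s).mp hs, h4, h5⟩
    refine E0.trans ?_
    refine ((Equiv.subtypeSubtypeEquivSubtypeInter _ _).symm.trans ?_).trans
      (Equiv.subtypeProdEquivProd)
    refine (stableEquivProd S).subtypeEquiv ?_
    rintro ⟨α, hst⟩
    show ((∀ h, α h ≠ h) ∧ (∀ h, α (α h) = h) ∧
        numOrbitsOn (sigmaFun n α S) Set.univ = v ∧
        numOrbitsOn (fun h => sigmaFun n α S (α h)) Set.univ = f) ↔ _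
    have hstC : ∀ x, x ∈ (Sᶜ : Set (Fin (2*n))) ↔ α x ∈ Sᶜ := fun x => not_congr (hst x)
    have hfpf : (∀ h, α h ≠ h) ↔
        ((∀ y : ↥S, α.subtypePerm (fun x => (hst x).symm) y ≠ y) ∧
         (∀ y : ↥(Sᶜ : Set (Fin (2*n))), α.subtypePerm (fun x => (hstC x).symm) y ≠ y)) := by
      constructor
      · intro h
        exact ⟨fun y hy => h y.val (congrArg Subtype.val hy),
               fun y hy => h y.val (congrArg Subtype.val hy)⟩
      · rintro ⟨hA, hB⟩ x hx
        by_cases hxS : x ∈ S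
        · exact hA ⟨x, hxS⟩ (Subtype.ext hx)
        · exact hB ⟨x, hxS⟩ (Subtype.ext hx)
    have hinvol : (∀ h, α (α h) = h) ↔
        ((∀ y : ↥S, α.subtypePerm (fun x => (hst x).symm) (α.subtypePerm (fun x => (hst x).symm) y) = y) ∧
         (∀ y : ↥(Sᶜ : Set (Fin (2*n))), α.subtypePerm (fun x => (hstC x).symm) (α.subtypePerm (fun x => (hstC x).symm) y) = y)) := by
      constructor
      · intro h
        exact ⟨fun y => Subtype.ext (h y.val), fun y => Subtype.ext (h y.val)⟩
      · rintro ⟨hA, hB⟩ x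
        by_cases hxS : x ∈ S
        · exact congrArg Subtype.val (hA ⟨x, hxS⟩)
        · exact congrArg Subtype.val (hB ⟨x, hxS⟩)
    have hcv : numOrbitsOn (sigmaFun n α S) Set.univ = v ↔
        PvProp S v (α.subtypePerm (fun x => (hst x).symm)) :=
      cv_iff α S hst _ (fun x hx => sigmaFun_mem hx) (fun x hx => sigmaFun_not_mem hx) v
    constructor
    · rintro ⟨h1, h2, h4, h5⟩
      have hcf : numOrbitsOn (fun h => sigmaFun n α S (α h)) Set.univ = f ↔
          PvProp Sᶜ f (α.subtypePerm (fun x => (hstC x).symm)) := by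
        refine cv_iff α Sᶜ hstC _ ?_ ?_ f
        · intro x hx
          exact sigmaFun_not_mem ((hstC x).mp hx)
        · intro x hx
          have hx' : x ∈ S := by simpa using hx
          rw [sigmaFun_mem ((hst x).mp hx'), h2 x]
      exact ⟨⟨(hfpf.mp h1).1, (hinvol.mp h2).1, hcv.mp h4⟩,
             ⟨(hfpf.mp h1).2, (hinvol.mp h2).2, hcf.mp h5⟩⟩
    · rintro ⟨⟨hA1, hA2, hA3⟩, ⟨hB1, hB2, hB3⟩⟩
      have h1 := hfpf.mpr ⟨hA1, hB1⟩
      have h2 := hinvol.mpr ⟨hA2, hB2⟩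
      have hcf : numOrbitsOn (fun h => sigmaFun n α S (α h)) Set.univ = f ↔
          PvProp Sᶜ f (α.subtypePerm (fun x => (hstC x).symm)) := by
        refine cv_iff α Sᶜ hstC _ ?_ ?_ f
        · intro x hx
          exact sigmaFun_not_mem ((hstC x).mp hx)
        · intro x hx
          have hx' : x ∈ S := by simpa using hx
          rw [sigmaFun_mem ((hst x).mp hx'), h2 x]
      exact ⟨h1, h2, hcv.mpr hA3, hcf.mpr hB3⟩
  rw [hmaster]
  -- evaluate the two factors
  obtain ⟨m, hm⟩ := hpar
  have hS2 : S.ncard = 2 * m := by omega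
  have hcompl : S.ncard + (Sᶜ : Set (Fin (2*n))).ncard = 2 * n := by
    rw [Set.ncard_add_ncard_compl]
    simp [Nat.card_eq_fintype_card]
  have hmn : m ≤ n := by omega
  have hSc2 : (Sᶜ : Set (Fin (2*n))).ncard = 2 * (n - m) := by omega
  have hdiv : S.ncard / 2 = m := by omega
  rw [hdiv]
  congr 1
  · rcases Nat.eq_zero_or_pos m with rfl | hmpos
    · have hSe : S = ∅ := by
        rw [← Set.ncard_eq_zero (Set.toFinite S)]
        omega
      exact cnt_eval_zero' S hSe v
    · exact cnt_eval_pos S hmpos hS2 v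
  · rcases Nat.eq_zero_or_pos (n - m) with h0 | hpos
    · have hSe : (Sᶜ : Set (Fin (2*n))) = ∅ := by
        rw [← Set.ncard_eq_zero (Set.toFinite _)]
        omega
      rw [h0]
      exact cnt_eval_zero' Sᶜ hSe f
    · rw [show n - m = n - m from rfl]
      exact cnt_eval_pos Sᶜ hpos hSc2 f

end PerS


/-- the number of covered maps with `n` edges, `v` vertices and `f`
faces (encoded as pairs `(α,S)`) equals `∑_{m=0}^{n} C(2n,2m)·A^v(m)·A^f(n−m)`. -/
theorem covered_maps_shuffle_count (n v f : ℕ) (hn : 1 ≤ n) (hv : 1 ≤ v) (hf : 1 ≤ f) :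
    Nat.card {p : Equiv.Perm (Fin (2 * n)) × Set (Fin (2 * n)) //
      (∀ h, p.1 h ≠ h) ∧ (∀ h, p.1 (p.1 h) = h) ∧ (∀ s ∈ p.2, p.1 s ∈ p.2) ∧
      numOrbitsOn (sigmaFun n p.1 p.2) Set.univ = v ∧
      numOrbitsOn (fun h => sigmaFun n p.1 p.2 (p.1 h)) Set.univ = f} =
    ∑ m ∈ Finset.range (n + 1),
      Nat.choose (2 * n) (2 * m) * A v m * A f (n - m) := by
  classical
  -- step 1: reorganize as a sigma type over the subset
  have E : {p : Equiv.Perm (Fin (2 * n)) × Set (Fin (2 * n)) //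
      (∀ h, p.1 h ≠ h) ∧ (∀ h, p.1 (p.1 h) = h) ∧ (∀ s ∈ p.2, p.1 s ∈ p.2) ∧
      numOrbitsOn (sigmaFun n p.1 p.2) Set.univ = v ∧
      numOrbitsOn (fun h => sigmaFun n p.1 p.2 (p.1 h)) Set.univ = f} ≃
      Σ S : Set (Fin (2 * n)), {α : Equiv.Perm (Fin (2*n)) //
      (∀ h, α h ≠ h) ∧ (∀ h, α (α h) = h) ∧ (∀ s ∈ S, α s ∈ S) ∧
      numOrbitsOn (sigmaFun n α S) Set.univ = v ∧
      numOrbitsOn (fun h => sigmaFun n α S (α h)) Set.univ = f} :=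
    { toFun := fun x => ⟨x.1.2, ⟨x.1.1, x.2⟩⟩
      invFun := fun s => ⟨(s.2.1, s.1), s.2.2⟩
      left_inv := fun x => rfl
      right_inv := fun s => rfl }
  rw [Nat.card_congr E]
  rw [Nat.card_eq_fintype_card, Fintype.card_sigma]
  have hfib : ∀ S : Set (Fin (2 * n)), (Fintype.card {α : Equiv.Perm (Fin (2*n)) //
      (∀ h, α h ≠ h) ∧ (∀ h, α (α h) = h) ∧ (∀ s ∈ S, α s ∈ S) ∧
      numOrbitsOn (sigmaFun n α S) Set.univ = v ∧
      numOrbitsOn (fun h => sigmaFun n α S (α h)) Set.univ = f}) =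
      if Even S.ncard then A v (S.ncard / 2) * A f (n - S.ncard / 2) else 0 := by
    intro S
    rw [← Nat.card_eq_fintype_card]
    exact perS n v f hn S
  simp only [hfib]
  -- step 2: sum over sets = sum over finsets
  have hstep2 : ∑ S : Set (Fin (2*n)), (if Even S.ncard then A v (S.ncard / 2) * A f (n - S.ncard / 2) else 0) =
      ∑ s : Finset (Fin (2*n)), (if Even s.card then A v (s.card / 2) * A f (n - s.card / 2) else 0) := by
    refine (Fintype.sum_equiv (Fintype.finsetEquivSet (α := Fin (2*n)))
      (fun s : Finset (Fin (2*n)) => if Even s.card then A v (s.card / 2) * A f (n - s.card / 2) else 0)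
      (fun S : Set (Fin (2*n)) => if Even S.ncard then A v (S.ncard / 2) * A f (n - S.ncard / 2) else 0)
      (fun s => ?_)).symm
    simp [Set.ncard_coe_finset]
  rw [hstep2]
  -- step 3: group by cardinality
  have hps : ∑ s : Finset (Fin (2*n)), (if Even s.card then A v (s.card / 2) * A f (n - s.card / 2) else 0) =
      ∑ s ∈ (Finset.univ : Finset (Fin (2*n))).powerset,
        (if Even s.card then A v (s.card / 2) * A f (n - s.card / 2) else 0) := by
    rw [Finset.powerset_univ]
  rw [hps, Finset.sum_powerset_apply_card
    (fun k => if Even k then A v (k / 2) * A f (n - k / 2) else 0),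
    Finset.card_univ, Fintype.card_fin]
  -- step 4: reindex even k = 2m
  have hfil : ∑ k ∈ Finset.range (2*n+1),
      (2*n).choose k • (if Even k then A v (k / 2) * A f (n - k / 2) else 0) =
      ∑ k ∈ (Finset.range (2*n+1)).filter (fun k => Even k),
      (2*n).choose k • (if Even k then A v (k / 2) * A f (n - k / 2) else 0) := by
    refine (Finset.sum_filter_of_ne ?_).symm
    intro x hx hne
    by_contra h
    rw [if_neg h, smul_zero] at hne
    exact hne rfl
  have himg : (Finset.range (2*n+1)).filter (fun k => Even k) =
      (Finset.range (n+1)).image (fun m => 2*m) := by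
    ext k
    simp only [Finset.mem_filter, Finset.mem_range, Finset.mem_image]
    constructor
    · rintro ⟨hk, m, hm⟩
      exact ⟨m, by omega, by omega⟩
    · rintro ⟨m, hm, rfl⟩
      exact ⟨by omega, m, by omega⟩
  rw [hfil, himg, Finset.sum_image (by intro a _ b _ h; simp only at h; omega)]
  refine Finset.sum_congr rfl ?_
  intro m hm
  rw [if_pos (even_two_mul m), smul_eq_mul]
  rw [show 2 * m / 2 = m by omega]
  ring
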